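/- Let (X, 𝔄, d) be a C*-algebra valued metric space over a unital C*-algebra 𝔄, and let T : X → X satisfy d(Tx, Ty) ⪯ A · (d(x,Tx) + d(y,Ty)) for all x,y ∈ X, where A is a positive element of 𝔄 commuting with every element of 𝔄 and ‖A‖ < 1/2. Set B := A(1 − A)⁻¹. Then for all x, y ∈ X and all n ≥ 1, d(Tⁿx, Tⁿy) ⪯ Bⁿ · (d(x,Tx) + d(y,Ty)); in particular T is a C*-algebra valued Ćirić-type2 contractive mapping. -/

import Mathlib

open Filter Topology Function

section Aux

variable {R : Type*} [Ring R] [PartialOrder R] [StarRing R] [StarOrderedRing R]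

lemma central_mul_nonneg {p x : R} (hp : 0 ≤ p) (hpc : ∀ b : R, p * b = b * p)
    (hx : 0 ≤ x) : 0 ≤ p * x := by
  rw [StarOrderedRing.nonneg_iff] at hx
  induction hx using AddSubmonoid.closure_induction with
  | mem z hz =>
    obtain ⟨s, rfl⟩ := hz
    have h : p * (star s * s) = star s * p * s := by
      rw [← mul_assoc, hpc (star s)]
    rw [h]; exact star_left_conjugate_nonneg hp s
  | zero => simp
  | add x y hx hy ihx ihy => rw [mul_add]; exact add_nonneg ihx ihy

lemma central_mul_le {p x y : R} (hp : 0 ≤ p) (hpc : ∀ b : R, p * b = b * p)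
    (h : x ≤ y) : p * x ≤ p * y := by
  have := central_mul_nonneg hp hpc (sub_nonneg.2 h)
  rw [mul_sub] at this
  exact sub_nonneg.1 this

end Aux

section Sqrt

variable {A : Type*} [NormedRing A] [StarRing A] [CStarRing A] [PartialOrder A]
  [StarOrderedRing A] [CompleteSpace A] [NormedAlgebra ℂ A]

/-- star commutes with halving. -/
lemma star_half_smul (w : A) : star ((1/2 : ℂ) • w) = (1/2 : ℂ) • star w := by
  have key : ∀ u v : A, u + u = v + v → u = v := by
    intro u v huv
    have h2 : (2:ℂ) • u = (2:ℂ) • v := by rw [two_smul, two_smul]; exact huv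
    calc u = (2:ℂ)⁻¹ • ((2:ℂ) • u) := by rw [smul_smul]; norm_num
    _ = (2:ℂ)⁻¹ • ((2:ℂ) • v) := by rw [h2]
    _ = v := by rw [smul_smul]; norm_num
  apply key
  have h1 : (1/2:ℂ) • w + (1/2:ℂ) • w = w := by
    rw [← add_smul]; norm_num
  calc star ((1/2:ℂ) • w) + star ((1/2:ℂ) • w) = star ((1/2:ℂ) • w + (1/2:ℂ) • w) :=
        (star_add _ _).symm
  _ = star w := by rw [h1]
  _ = (1/2:ℂ) • star w + (1/2:ℂ) • star w := by rw [← add_smul]; norm_num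

lemma norm_half_complex : ‖(1/2 : ℂ)‖ = 1/2 := by
  rw [show ((1:ℂ)/2) = ((1/2 : ℝ) : ℂ) by norm_num, Complex.norm_real]; norm_num

/-- If `0 ≤ a`, `a` is central and `‖a‖ < 1/2`, then `1 - a` is a square of a selfadjoint
central element, hence nonneg. -/
lemma one_sub_nonneg_of_small {a : A} (ha_pos : 0 ≤ a) (ha_comm : ∀ b : A, a * b = b * a)
    (ha_norm : ‖a‖ < 1 / 2) : 0 ≤ 1 - a := by
  have ha_sa : star a = a := (IsSelfAdjoint.of_nonneg ha_pos).star_eq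
  -- Newton iteration y ↦ (1/2) • (a + y*y)
  set f : A → A := fun z => (1/2 : ℂ) • (a + z * z) with hf
  set y : ℕ → A := fun n => f^[n] 0 with hy
  have hy_succ : ∀ n, y (n+1) = f (y n) := by
    intro n; simp only [hy, Function.iterate_succ_apply']
  -- bound
  have hbound : ∀ n, ‖y n‖ ≤ 1/2 := by
    intro n
    induction n with
    | zero => simp [hy]
    | succ n ih =>
      rw [hy_succ, hf]
      calc ‖(1/2 : ℂ) • (a + y n * y n)‖ = ‖(1/2:ℂ)‖ * ‖a + y n * y n‖ := norm_smul _ _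
      _ ≤ (1/2) * (‖a‖ + ‖y n‖ * ‖y n‖) := by
          rw [norm_half_complex]
          gcongr
          exact (norm_add_le _ _).trans (by gcongr; exact norm_mul_le _ _)
      _ ≤ (1/2) * (1/2 + (1/2) * (1/2)) := by gcongr <;> first | exact ha_norm.le | exact ih
      _ ≤ 1/2 := by norm_num
  -- selfadjoint
  have hsa : ∀ n, star (y n) = y n := by
    intro n
    induction n with
    | zero => simp [hy]
    | succ n ih =>
      rw [hy_succ, hf]
      simp only []
      rw [star_half_smul, star_add, star_mul, ih, ha_sa]
  -- central
  have hcomm : ∀ n, ∀ b : A, y n * b = b * y n := by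
    intro n
    induction n with
    | zero => intro b; simp [hy]
    | succ n ih =>
      intro b
      rw [hy_succ, hf]
      simp only []
      rw [smul_mul_assoc, mul_smul_comm, add_mul, mul_add, ha_comm b, mul_assoc, ih b,
        ← mul_assoc, ih b, mul_assoc]
  -- Cauchy
  have hstep : ∀ n, ‖y (n+1) - y (n+2)‖ ≤ (1/2) * ‖y n - y (n+1)‖ := by
    intro n
    have hgen : ∀ p q : A, f p - f q = (1/2 : ℂ) • (p * (p - q) + (p - q) * q) := by
      intro p q
      show (1/2 : ℂ) • (a + p * p) - (1/2 : ℂ) • (a + q * q) = _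
      rw [← smul_sub]
      congr 1
      noncomm_ring
    have hdiff : y (n+1) - y (n+2) =
        (1/2 : ℂ) • (y n * (y n - y (n+1)) + (y n - y (n+1)) * y (n+1)) := by
      rw [show y (n+1) - y (n+2) = f (y n) - f (y (n+1)) from
        congrArg₂ Sub.sub (hy_succ n) (hy_succ (n+1)), hgen]
    rw [hdiff]
    calc ‖(1/2:ℂ) • (y n * (y n - y (n+1)) + (y n - y (n+1)) * y (n+1))‖
        = ‖(1/2:ℂ)‖ * ‖y n * (y n - y (n+1)) + (y n - y (n+1)) * y (n+1)‖ := norm_smul _ _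
    _ ≤ (1/2) * (‖y n‖ * ‖y n - y (n+1)‖ + ‖y n - y (n+1)‖ * ‖y (n+1)‖) := by
        rw [norm_half_complex]
        gcongr
        exact (norm_add_le _ _).trans (by gcongr <;> exact norm_mul_le _ _)
    _ ≤ (1/2) * ((1/2) * ‖y n - y (n+1)‖ + ‖y n - y (n+1)‖ * (1/2)) := by
        gcongr <;> [exact hbound n; exact hbound (n+1)]
    _ = (1/2) * ‖y n - y (n+1)‖ := by ring
  have hgeo : ∀ n, ‖y n - y (n+1)‖ ≤ ‖y 0 - y 1‖ * (1/2)^n := by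
    intro n
    induction n with
    | zero => simp
    | succ n ih =>
      calc ‖y (n+1) - y (n+2)‖ ≤ (1/2) * ‖y n - y (n+1)‖ := hstep n
      _ ≤ (1/2) * (‖y 0 - y 1‖ * (1/2)^n) := by gcongr
      _ = ‖y 0 - y 1‖ * (1/2)^(n+1) := by ring
  have hcauchy : CauchySeq y :=
    SeminormedAddCommGroup.cauchySeq_of_le_geometric (by norm_num : (1/2:ℝ) < 1) hgeo
  obtain ⟨l, hl⟩ := cauchySeq_tendsto_of_complete hcauchy
  -- fixed point
  have hl_succ : Tendsto (fun n => y (n+1)) atTop (𝓝 l) :=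
    hl.comp (tendsto_add_atTop_nat 1)
  have hl_fix : l = (1/2 : ℂ) • (a + l * l) := by
    have h2 : Tendsto (fun n => f (y n)) atTop (𝓝 ((1/2 : ℂ) • (a + l * l))) := by
      apply Tendsto.const_smul
      exact tendsto_const_nhds.add (hl.mul hl)
    have h3 : (fun n => f (y n)) = fun n => y (n+1) := by
      funext n; rw [hy_succ]
    rw [h3] at h2
    exact tendsto_nhds_unique hl_succ h2
  have hl_sa : star l = l := by
    have h2 : Tendsto (fun n => star (y n)) atTop (𝓝 (star l)) := hl.star
    have h3 : (fun n => star (y n)) = y := funext hsa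
    rw [h3] at h2
    exact tendsto_nhds_unique h2 hl
  have hll : l + l = a + l * l := by
    calc l + l = (2:ℂ) • l := (two_smul _ _).symm
    _ = (2:ℂ) • ((1/2 : ℂ) • (a + l * l)) := by rw [← hl_fix]
    _ = a + l * l := by rw [smul_smul]; norm_num
  have hkey : 1 - a = star (1 - l) * (1 - l) := by
    rw [star_sub, star_one, hl_sa]
    have hexp : (1 - l) * (1 - l) = 1 - (l + l) + l * l := by noncomm_ring
    rw [hexp, hll]
    abel
  rw [hkey]
  exact star_mul_self_nonneg _

end Sqrt

/-- A C*-algebra valued metric space: `d : X × X → A` into a unital C*-algebra `A`. -/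
structure CStarMetric (X : Type*) (A : Type*) [NormedRing A] [StarRing A] [PartialOrder A] where
  d : X → X → A
  nonneg : ∀ x y, 0 ≤ d x y
  eq_zero_iff : ∀ x y, d x y = 0 ↔ x = y
  symm : ∀ x y, d x y = d y x
  triangle : ∀ x y z, d x y ≤ d x z + d z y

variable {X A : Type*} [NormedRing A] [StarRing A] [CStarRing A] [PartialOrder A]
  [StarOrderedRing A] [CompleteSpace A] [NormedAlgebra ℂ A]

/-- A sequence converges to `x` when `‖d (s n) x‖ → 0`. -/
def CStarConverges (M : CStarMetric X A) (s : ℕ → X) (x : X) : Prop :=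
  Tendsto (fun n => ‖M.d (s n) x‖) atTop (𝓝 (0 : ℝ))

/-- Cauchy sequence: `‖d (s n) (s m)‖ → 0` as `n, m → ∞`. -/
def CStarCauchy (M : CStarMetric X A) (s : ℕ → X) : Prop :=
  ∀ ε : ℝ, 0 < ε → ∃ N : ℕ, ∀ n m : ℕ, N ≤ n → N ≤ m → ‖M.d (s n) (s m)‖ < ε

/-- Completeness: every Cauchy sequence converges. -/
def CStarComplete (M : CStarMetric X A) : Prop :=
  ∀ s : ℕ → X, CStarCauchy M s → ∃ x, CStarConverges M s x

/-- Orbital continuity of `T` at `u`. -/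
def OrbContAt (M : CStarMetric X A) (T : X → X) (u : X) : Prop :=
  ∀ (x : X) (k : ℕ → ℕ), StrictMono k →
    Tendsto (fun i => ‖M.d (T^[k i] x) u‖) atTop (𝓝 (0 : ℝ)) →
    Tendsto (fun i => ‖M.d (T^[k i + 1] x) (T u)‖) atTop (𝓝 (0 : ℝ))

/-- Orbital continuity of `T` on `X`. -/
def OrbCont (M : CStarMetric X A) (T : X → X) : Prop :=
  ∀ u, OrbContAt M T u

/-- Ćirić-type1 contractive mapping. -/
def CiricType1 (M : CStarMetric X A) (T : X → X) : Prop :=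
  ∃ q δ : X → X → A, (∀ x y, ‖q x y‖ < 1) ∧ (∀ x y, 0 ≤ δ x y) ∧
    ∀ x y : X, ∀ n : ℕ, 1 ≤ n →
      M.d (T^[n] x) (T^[n] y) ≤ star (q x y) ^ n * δ x y * q x y ^ n

/-- Ćirić-type2 contractive mapping: `q` takes values in the central positive elements. -/
def CiricType2 (M : CStarMetric X A) (T : X → X) : Prop :=
  ∃ q δ : X → X → A,
    (∀ x y, 0 ≤ q x y ∧ (∀ b : A, q x y * b = b * q x y) ∧ ‖q x y‖ < 1) ∧
    (∀ x y, 0 ≤ δ x y) ∧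
    ∀ x y : X, ∀ n : ℕ, 1 ≤ n → M.d (T^[n] x) (T^[n] y) ≤ q x y ^ n * δ x y

/-- Iterated estimate for Kannan-type mappings: with B = a(1-a)⁻¹ one has
d(Tⁿx, Tⁿy) ≤ Bⁿ (d(x,Tx) + d(y,Ty)); in particular T is Ciric-type2 contractive. -/
theorem kannan_type_iterate_estimate_and_ciric2
    (M : CStarMetric X A) (T : X → X)
    (a : A) (ha_pos : 0 ≤ a) (ha_comm : ∀ b : A, a * b = b * a) (ha_norm : ‖a‖ < 1 / 2)
    (hT : ∀ x y : X, M.d (T x) (T y) ≤ a * (M.d x (T x) + M.d y (T y))) :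
    (∀ x y : X, ∀ n : ℕ, 1 ≤ n →
      M.d (T^[n] x) (T^[n] y) ≤
        (a * Ring.inverse (1 - a)) ^ n * (M.d x (T x) + M.d y (T y))) ∧
    CiricType2 M T := by
  rcases subsingleton_or_nontrivial A with hs | hnt
  · refine ⟨fun x y n hn => le_of_eq (Subsingleton.elim _ _),
      fun _ _ => 0, fun _ _ => 0,
      fun x y => ⟨le_of_eq (Subsingleton.elim _ _), fun b => Subsingleton.elim _ _,
        by rw [norm_zero]; norm_num⟩,
      fun x y => le_of_eq (Subsingleton.elim _ _),
      fun x y n hn => le_of_eq (Subsingleton.elim _ _)⟩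
  -- nontrivial case
  have ha1 : ‖a‖ < 1 := ha_norm.trans (by norm_num)
  have h1a : 0 ≤ 1 - a := one_sub_nonneg_of_small ha_pos ha_comm ha_norm
  have ha_sa : star a = a := (IsSelfAdjoint.of_nonneg ha_pos).star_eq
  set inv : A := Ring.inverse (1 - a) with hinv_def
  have hinv_eq : inv = ↑(Units.oneSub a ha1)⁻¹ := NormedRing.inverse_one_sub a ha1
  have h_mul_inv : (1 - a) * inv = 1 := by
    rw [hinv_eq, show (1 : A) - a = ↑(Units.oneSub a ha1) from rfl, Units.mul_inv]
  have h_inv_mul : inv * (1 - a) = 1 := by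
    rw [hinv_eq, show (1 : A) - a = ↑(Units.oneSub a ha1) from rfl, Units.inv_mul]
  have h1ac : ∀ b : A, (1 - a) * b = b * (1 - a) := by
    intro b; rw [sub_mul, mul_sub, one_mul, mul_one, ha_comm b]
  have hinvc : ∀ b : A, inv * b = b * inv := by
    intro b
    calc inv * b = inv * b * ((1 - a) * inv) := by rw [h_mul_inv, mul_one]
    _ = inv * ((1 - a) * b) * inv := by rw [h1ac b]; simp only [mul_assoc]
    _ = inv * (1 - a) * (b * inv) := by simp only [mul_assoc]
    _ = b * inv := by rw [h_inv_mul, one_mul]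
  have hinv_sa : star inv = inv := by
    have h1 : star inv * (1 - a) = 1 := by
      rw [show (1:A) - a = star (1 - a) by rw [star_sub, star_one, ha_sa], ← star_mul,
        h_mul_inv, star_one]
    calc star inv = star inv * ((1 - a) * inv) := by rw [h_mul_inv, mul_one]
    _ = star inv * (1 - a) * inv := by rw [mul_assoc]
    _ = inv := by rw [h1, one_mul]
  have hinv_nonneg : 0 ≤ inv := by
    have h := star_left_conjugate_nonneg h1a inv
    rwa [hinv_sa, h_inv_mul, one_mul] at h
  -- b = a * inv
  set b : A := a * inv with hb_def
  have hb_nonneg : 0 ≤ b := central_mul_nonneg ha_pos ha_comm hinv_nonneg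
  have hb_c : ∀ w : A, b * w = w * b := by
    intro w
    calc a * inv * w = a * (inv * w) := mul_assoc _ _ _
    _ = a * (w * inv) := by rw [hinvc w]
    _ = a * w * inv := (mul_assoc _ _ _).symm
    _ = w * a * inv := by rw [ha_comm w]
    _ = w * (a * inv) := mul_assoc _ _ _
  have hpow_c : ∀ n : ℕ, ∀ w : A, b ^ n * w = w * b ^ n := by
    intro n
    induction n with
    | zero => intro w; simp
    | succ n ih =>
      intro w
      rw [pow_succ' b n, mul_assoc, ih w, ← mul_assoc, hb_c w, mul_assoc]
  have hpow_nonneg : ∀ n : ℕ, 0 ≤ b ^ n := by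
    intro n
    induction n with
    | zero => simpa using star_mul_self_nonneg (1 : A)
    | succ n ih => rw [pow_succ' b n]; exact central_mul_nonneg hb_nonneg hb_c ih
  -- a ≤ b
  have hinv_sub_one : inv - 1 = inv * a := by
    have h := h_inv_mul
    rw [mul_sub, mul_one] at h
    rw [← h]; abel
  have hab : a ≤ b := by
    have hba : b - a = a * (inv * a) := by
      rw [hb_def, ← hinv_sub_one, mul_sub, mul_one]
    have : 0 ≤ b - a := by
      rw [hba]
      exact central_mul_nonneg ha_pos ha_comm
        (central_mul_nonneg hinv_nonneg hinvc ha_pos)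
    exact sub_nonneg.1 this
  -- norm bound on b
  have hb_norm : ‖b‖ < 1 := by
    have hform : inv = 1 + a * inv := by
      have h := h_mul_inv
      rw [sub_mul, one_mul] at h
      have : inv - a * inv = 1 := h
      rw [← this]; abel
    have hn : ‖inv‖ ≤ 1 + ‖a‖ * ‖inv‖ := by
      calc ‖inv‖ = ‖1 + a * inv‖ := by rw [← hform]
      _ ≤ ‖(1:A)‖ + ‖a * inv‖ := norm_add_le _ _
      _ ≤ 1 + ‖a‖ * ‖inv‖ := by rw [norm_one]; gcongr; exact norm_mul_le _ _
    have hbn : ‖b‖ ≤ ‖a‖ * ‖inv‖ := norm_mul_le _ _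
    have h0a : (0:ℝ) ≤ ‖a‖ := norm_nonneg a
    have h0i : (0:ℝ) ≤ ‖inv‖ := norm_nonneg inv
    nlinarith
  -- Step A
  have stepA : ∀ z : X, M.d (T z) (T (T z)) ≤ b * M.d z (T z) := by
    intro z
    have h0 := hT z (T z)
    rw [mul_add] at h0
    have h1' : M.d (T z) (T (T z)) - a * M.d (T z) (T (T z)) ≤ a * M.d z (T z) :=
      sub_le_iff_le_add.mpr h0
    have h2' : (1 - a) * M.d (T z) (T (T z)) ≤ a * M.d z (T z) := by
      rwa [sub_mul, one_mul]
    have h3' := central_mul_le hinv_nonneg hinvc h2'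
    rwa [← mul_assoc, h_inv_mul, one_mul, ← mul_assoc,
      show inv * a = a * inv from (ha_comm inv).symm, ← hb_def] at h3'
  -- Step B
  have stepB : ∀ (z : X) (n : ℕ), M.d (T^[n] z) (T (T^[n] z)) ≤ b ^ n * M.d z (T z) := by
    intro z n
    induction n with
    | zero => simpa using le_of_eq rfl
    | succ n ih =>
      rw [Function.iterate_succ_apply']
      calc M.d (T (T^[n] z)) (T (T (T^[n] z))) ≤ b * M.d (T^[n] z) (T (T^[n] z)) :=
            stepA (T^[n] z)
      _ ≤ b * (b ^ n * M.d z (T z)) := central_mul_le hb_nonneg hb_c ih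
      _ = b ^ (n+1) * M.d z (T z) := by
            rw [pow_succ' b n, mul_assoc b (b ^ n) (M.d z (T z))]
  -- main estimate
  have main : ∀ x y : X, ∀ n : ℕ, 1 ≤ n →
      M.d (T^[n] x) (T^[n] y) ≤ b ^ n * (M.d x (T x) + M.d y (T y)) := by
    intro x y n hn
    obtain ⟨m, rfl⟩ : ∃ m, n = m + 1 := ⟨n - 1, by omega⟩
    have h0 := hT (T^[m] x) (T^[m] y)
    have hsum : M.d (T^[m] x) (T (T^[m] x)) + M.d (T^[m] y) (T (T^[m] y)) ≤
        b ^ m * (M.d x (T x) + M.d y (T y)) := by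
      rw [mul_add]
      exact add_le_add (stepB x m) (stepB y m)
    have h2 := central_mul_le ha_pos ha_comm hsum
    have h3 : a * (b ^ m * (M.d x (T x) + M.d y (T y))) ≤
        b ^ (m+1) * (M.d x (T x) + M.d y (T y)) := by
      have hdiff : b ^ (m+1) * (M.d x (T x) + M.d y (T y)) -
          a * (b ^ m * (M.d x (T x) + M.d y (T y))) =
          ((b - a) * b ^ m) * (M.d x (T x) + M.d y (T y)) := by
        rw [pow_succ' b m]
        noncomm_ring
      have hsubc : ∀ w : A, (b - a) * w = w * (b - a) := by
        intro w; rw [sub_mul, mul_sub, hb_c w, ha_comm w]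
      have hcen : ∀ w : A, ((b - a) * b ^ m) * w = w * ((b - a) * b ^ m) := by
        intro w
        calc ((b - a) * b ^ m) * w = (b - a) * (b ^ m * w) := mul_assoc _ _ _
        _ = (b - a) * (w * b ^ m) := by rw [hpow_c m w]
        _ = ((b - a) * w) * b ^ m := (mul_assoc _ _ _).symm
        _ = (w * (b - a)) * b ^ m := by rw [hsubc w]
        _ = w * ((b - a) * b ^ m) := mul_assoc _ _ _
      have hnn : 0 ≤ (b - a) * b ^ m :=
        central_mul_nonneg (sub_nonneg.2 hab) hsubc (hpow_nonneg m)
      have := central_mul_nonneg hnn hcen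
        (add_nonneg (M.nonneg x (T x)) (M.nonneg y (T y)))
      rw [← hdiff] at this
      exact sub_nonneg.1 this
    rw [Function.iterate_succ_apply', Function.iterate_succ_apply']
    exact h0.trans (h2.trans h3)
  refine ⟨main, fun _ _ => b, fun x y => M.d x (T x) + M.d y (T y),
    fun x y => ⟨hb_nonneg, hb_c, hb_norm⟩,
    fun x y => add_nonneg (M.nonneg x (T x)) (M.nonneg y (T y)),
    main⟩
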